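/- Quantitative bounds underlying Property 2 (stability-boundary behavior of Lyapunov participation factors): suppose A is Hurwitz and let P_{x_k ij} := −½ { conj(v_i) conj(u_i^k) u_j^k v_jᵀ/(conj(λ_i) + λ_j) + v_i u_i^k u_j^k v_jᵀ/(λ_i + λ_j) }_H and p_{ki} := u_i^k v_i^k. Then: (a) if λ_i is real and p_{ki} is real, the (k,k) entry of P_{x_k ii} equals p_{ki}²/(−2λ_i); and (b) for all i, j, the absolute value of the (k,k) entry of P_{x_k ij} is at most |p_{ki}| |p_{kj}| / ( −Re(λ_i) − Re(λ_j) ). -/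

import Mathlib

open Matrix BigOperators

/-- The Hermitian part `{M}_H = ½(M + Mᴴ)` of a square complex matrix. -/
noncomputable def hermPart {n : ℕ} (M : Matrix (Fin n) (Fin n) ℂ) :
    Matrix (Fin n) (Fin n) ℂ :=
  (1 / 2 : ℂ) • (M + Mᴴ)

/-- The pairwise sub-Gramian of the `k`-th state associated with the `i`-th and `j`-th
modes, `P_{x_k ij} := −½ { conj(v_i) conj(u_i^k) u_j^k v_jᵀ/(conj(λ_i)+λ_j)
+ v_i u_i^k u_j^k v_jᵀ/(λ_i+λ_j) }_H`. -/
noncomputable def pairStateSubGramian {n : ℕ} (U V : Matrix (Fin n) (Fin n) ℂ)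
    (lam : Fin n → ℂ) (k i j : Fin n) : Matrix (Fin n) (Fin n) ℂ :=
  -((1 / 2 : ℂ) • hermPart
      ((starRingEnd ℂ (lam i) + lam j)⁻¹ •
          Matrix.vecMulVec (fun a => starRingEnd ℂ (V i a))
            (fun b => starRingEnd ℂ (U k i) * U k j * V j b) +
        (lam i + lam j)⁻¹ •
          Matrix.vecMulVec (fun a => V i a)
            (fun b => U k i * U k j * V j b)))

/-- Quantitative bounds underlying Property 2: with `p_{ki} := u_i^k v_i^k`,
(a) if `λ_i` and `p_{ki}` are real, the `(k,k)` entry of `P_{x_k ii}` equals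
`p_{ki}²/(−2λ_i)`; (b) for all `i, j`, the absolute value of the `(k,k)` entry of
`P_{x_k ij}` is at most `|p_{ki}| |p_{kj}| / (−Re(λ_i) − Re(λ_j))`. -/
lemma entry_eq {n : ℕ} (U V : Matrix (Fin n) (Fin n) ℂ) (lam : Fin n → ℂ) (k i j : Fin n) :
    pairStateSubGramian U V lam k i j k k =
      -(1/4 : ℂ) *
        ((starRingEnd ℂ (lam i) + lam j)⁻¹ * (starRingEnd ℂ (U k i * V i k) * (U k j * V j k))
        + (lam i + lam j)⁻¹ * ((U k i * V i k) * (U k j * V j k))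
        + (lam i + starRingEnd ℂ (lam j))⁻¹ * ((U k i * V i k) * starRingEnd ℂ (U k j * V j k))
        + (starRingEnd ℂ (lam i) + starRingEnd ℂ (lam j))⁻¹ *
            (starRingEnd ℂ (U k i * V i k) * starRingEnd ℂ (U k j * V j k))) := by
  simp only [pairStateSubGramian, hermPart, Matrix.neg_apply, Matrix.smul_apply,
    Matrix.add_apply, Matrix.conjTranspose_apply, Matrix.vecMulVec_apply, smul_eq_mul,
    star_add, star_mul', star_inv₀, _root_.map_add, _root_.map_mul, Complex.star_def,
    Complex.conj_conj]
  ring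

theorem lyapunov_pf_stability_boundary_bounds
    (n : ℕ) (hn : 1 ≤ n)
    (A U V : Matrix (Fin n) (Fin n) ℂ) (lam : Fin n → ℂ)
    (hUV : U * V = 1) (hVU : V * U = 1)
    (hA : A = U * Matrix.diagonal lam * V)
    (hHur : ∀ i, (lam i).re < 0)
    (k : Fin n) :
    (∀ i, (lam i).im = 0 → (U k i * V i k).im = 0 →
        pairStateSubGramian U V lam k i i k k =
          (U k i * V i k) ^ 2 / (-(2 : ℂ) * lam i)) ∧
    (∀ i j,
        ‖pairStateSubGramian U V lam k i j k k‖ ≤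
          ‖U k i * V i k‖ * ‖U k j * V j k‖ /
            (-(lam i).re - (lam j).re)) := by
  constructor
  · intro i him hpim
    have hl : lam i ≠ 0 := by
      intro h
      have := hHur i
      rw [h] at this
      simp at this
    have hc : starRingEnd ℂ (lam i) = lam i := Complex.conj_eq_iff_im.mpr him
    have hp : starRingEnd ℂ (U k i * V i k) = U k i * V i k := Complex.conj_eq_iff_im.mpr hpim
    rw [entry_eq, hc, hp]
    field_simp
    ring_nf
  · intro i j
    set p := U k i * V i k with hpdef
    set q := U k j * V j k with hqdef
    set R : ℝ := -(lam i).re - (lam j).re with hRdef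
    have hR : 0 < R := by
      have h1 := hHur i
      have h2 := hHur j
      simp only [hRdef]
      linarith
    set P : ℝ := ‖p‖ * ‖q‖ with hPdef
    have hP : 0 ≤ P := mul_nonneg (norm_nonneg _) (norm_nonneg _)
    have key : ∀ d x y : ℂ, d.re = (lam i).re + (lam j).re →
        ‖x‖ = ‖p‖ → ‖y‖ = ‖q‖ →
        ‖d⁻¹ * (x * y)‖ ≤ R⁻¹ * P := by
      intro d x y hd hx hy
      have hRd : R ≤ ‖d‖ := by
        have h1 : R ≤ |d.re| := by
          rw [hd, abs_of_neg (by linarith [hHur i, hHur j])]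
          simp only [hRdef]
          linarith
        exact h1.trans (Complex.abs_re_le_norm d)
      have hinv : ‖d‖⁻¹ ≤ R⁻¹ := by
        apply inv_anti₀ hR hRd
      calc ‖d⁻¹ * (x * y)‖ = ‖d‖⁻¹ * (‖x‖ * ‖y‖) := by
            rw [norm_mul, norm_mul, norm_inv]
        _ = ‖d‖⁻¹ * P := by rw [hx, hy]
        _ ≤ R⁻¹ * P := mul_le_mul_of_nonneg_right hinv hP
    rw [entry_eq]
    have h1 := key (starRingEnd ℂ (lam i) + lam j) (starRingEnd ℂ p) q
      (by simp) (by simp) rfl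
    have h2 := key (lam i + lam j) p q (by simp) rfl rfl
    have h3 := key (lam i + starRingEnd ℂ (lam j)) p (starRingEnd ℂ q)
      (by simp) rfl (by simp)
    have h4 := key (starRingEnd ℂ (lam i) + starRingEnd ℂ (lam j)) (starRingEnd ℂ p)
      (starRingEnd ℂ q) (by simp) (by simp) (by simp)
    have htri : ‖
        ((starRingEnd ℂ (lam i) + lam j)⁻¹ * (starRingEnd ℂ p * q)
        + (lam i + lam j)⁻¹ * (p * q)
        + (lam i + starRingEnd ℂ (lam j))⁻¹ * (p * starRingEnd ℂ q)
        + (starRingEnd ℂ (lam i) + starRingEnd ℂ (lam j))⁻¹ *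
            (starRingEnd ℂ p * starRingEnd ℂ q))‖ ≤ 4 * (R⁻¹ * P) := by
      calc _ ≤ _ := norm_add_le _ _
        _ ≤ _ := add_le_add (norm_add_le _ _) h4
        _ ≤ _ := add_le_add (add_le_add (norm_add_le _ _) h3) le_rfl
        _ ≤ 4 * (R⁻¹ * P) := by linarith
    rw [norm_mul]
    have habs : ‖(-(1/4 : ℂ))‖ = 1/4 := by
      rw [norm_neg]
      norm_num
    rw [habs]
    calc (1/4 : ℝ) * ‖_‖ ≤ (1/4) * (4 * (R⁻¹ * P)) :=
          mul_le_mul_of_nonneg_left htri (by norm_num)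
      _ = P / R := by
          rw [eq_div_iff (ne_of_gt hR)]
          field_simp
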